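/- Let M and N be smooth closed connected manifolds of dimensions m and n respectively with m < 2n - 2, and let f : M → N be a continuous map. If there exist continuous maps f', f'' : M → N which are both homotopic to f and which have no coincidences (f'(x) ≠ f''(x) for all x ∈ M), then f is loose, i.e. f itself is homotopic to a map f₀ with f₀(x) ≠ f(x) for all x ∈ M. -/

import Mathlib

open scoped Manifold
open Metric Set

section PushMachine

set_option linter.unusedSectionVars false

variable {N : Type*} [MetricSpace N] [CompactSpace N]

lemma exists_sep {S : Set (N × N)} (hS : IsCompact S) (h : ∀ q ∈ S, q.2 ≠ q.1) :
    ∃ δ : ℝ, 0 < δ ∧ ∀ q ∈ S, δ ≤ dist q.2 q.1 := by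
  rcases S.eq_empty_or_nonempty with rfl | hne
  · exact ⟨1, one_pos, by simp⟩
  · obtain ⟨q₀, hq₀, hmin⟩ := hS.exists_isMinOn hne
      ((continuous_snd.dist continuous_fst).continuousOn)
    exact ⟨dist q₀.2 q₀.1, dist_pos.2 (h q₀ hq₀), fun q hq => hmin hq⟩

lemma exists_pushChart {n : ℕ} [ChartedSpace (EuclideanSpace ℝ (Fin n)) N] (p : N) :
    ∃ (P : ℝ → N → N → N) (Core : Set N) (δ : ℝ),
      0 < δ ∧ IsOpen Core ∧ p ∈ Core ∧
      ContinuousOn (fun q : ℝ × N × N => P q.1 q.2.1 q.2.2) {q | q.2.2 ≠ q.2.1} ∧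
      (∀ a y, P 0 a y = y) ∧
      (∀ s a y, y ≠ a → P s a y ≠ a) ∧
      (∀ a ∈ Core, ∀ y, y ≠ a → δ ≤ dist (P 1 a y) a) := by
  classical
  set E := EuclideanSpace ℝ (Fin n) with hE
  set φ := chartAt E p with hφdef
  have hpU : p ∈ φ.source := mem_chart_source E p
  set c : E := φ p with hc
  obtain ⟨r, hr, hrV⟩ := Metric.isOpen_iff.1 φ.open_target c (φ.map_source hpU)
  set ε := r / 7 with hεdef
  have hε0 : 0 < ε := by positivity
  have hV6 : closedBall c (6 * ε) ⊆ φ.target := fun z hz =>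
    hrV (lt_of_le_of_lt (mem_closedBall.1 hz) (by rw [hεdef]; linarith))
  -- compact chart pieces
  set Kset : ℝ → Set N := fun t => φ.source ∩ φ ⁻¹' closedBall c t with hKdef
  have hKsub : ∀ {t : ℝ}, t ≤ 6 * ε → Kset t = φ.symm '' closedBall c t := by
    intro t ht
    rw [φ.symm_image_eq_source_inter_preimage
      ((closedBall_subset_closedBall ht).trans hV6)]
  have hKco : ∀ {t : ℝ}, t ≤ 6 * ε → IsCompact (Kset t) := by
    intro t ht
    rw [hKsub ht]
    exact (isCompact_closedBall c t).image_of_continuousOn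
      (φ.continuousOn_symm.mono ((closedBall_subset_closedBall ht).trans hV6))
  have hKmono : ∀ {t t' : ℝ}, t ≤ t' → Kset t ⊆ Kset t' := fun h =>
    inter_subset_inter_right _ (preimage_mono (closedBall_subset_closedBall h))
  -- Tietze extension of the chart
  obtain ⟨ψ, hψr⟩ := ContinuousMap.exists_restrict_eq (X := N) (Y := E)
    (hKco (le_refl _)).isClosed
    ⟨_, (φ.continuousOn.mono inter_subset_left).restrict⟩
  have hψ : ∀ {y : N}, y ∈ Kset (6 * ε) → ψ y = φ y := by
    intro y hy
    exact ContinuousMap.congr_fun hψr ⟨y, hy⟩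
  -- Urysohn bump
  obtain ⟨lam, hlam0, hlam1, hlam01⟩ :=
    exists_continuous_zero_one_of_isClosed
      (s := (φ.source ∩ φ ⁻¹' ball c (2 * ε))ᶜ) (t := Kset ε)
      (φ.isOpen_inter_preimage isOpen_ball).isClosed_compl (hKco (by linarith)).isClosed
      (by
        rw [disjoint_compl_left_iff_subset]
        exact fun a ha => ⟨ha.1, mem_preimage.2 (mem_ball.2
          (lt_of_le_of_lt (mem_closedBall.1 (mem_preimage.1 ha.2)) (by linarith)))⟩)
  -- the push data
  set d : N → N → ℝ := fun a y => dist (ψ y) (ψ a) with hddef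
  set τ : ℝ → N → ℝ := fun s a => lam a * max 0 (min 1 s) with hτdef
  set F : ℝ → N → N → E :=
    fun s a y => ψ a + (1 + τ s a * (max 0 (ε - d a y) / d a y)) • (ψ y - ψ a) with hFdef
  set Cnd : N → N → Prop :=
    fun a y => a ∈ Kset (2 * ε) ∧ y ∈ Kset (4 * ε) ∧ d a y ≤ ε with hCdef
  set P : ℝ → N → N → N := fun s a y => if Cnd a y then φ.symm (F s a y) else y with hPdef
  -- basic estimates
  have hτ0 : ∀ s a, 0 ≤ τ s a := fun s a =>
    mul_nonneg (hlam01 a).1 (le_max_left _ _)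
  have hτ1 : ∀ s a, τ s a ≤ 1 := fun s a =>
    mul_le_one₀ (hlam01 a).2 (le_max_left _ _) (max_le zero_le_one (min_le_left _ _))
  have hψa2 : ∀ {a : N}, a ∈ Kset (2 * ε) → ψ a = φ a := fun ha =>
    hψ (hKmono (by linarith) ha)
  have hψy4 : ∀ {y : N}, y ∈ Kset (4 * ε) → ψ y = φ y := fun hy =>
    hψ (hKmono (by linarith) hy)
  have hFd : ∀ (s : ℝ) (a y : N), d a y ≠ 0 →
      dist (F s a y) (ψ a) = d a y + τ s a * max 0 (ε - d a y) := by
    intro s a y hd0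
    have hdpos : 0 < d a y := lt_of_le_of_ne dist_nonneg (Ne.symm hd0)
    have hnorm : ‖ψ y - ψ a‖ = d a y := by
      rw [hddef]; exact (dist_eq_norm _ _).symm
    have hk : 0 ≤ 1 + τ s a * (max 0 (ε - d a y) / d a y) := by
      have := hτ0 s a
      have h2 : 0 ≤ max 0 (ε - d a y) / d a y :=
        div_nonneg (le_max_left _ _) hdpos.le
      nlinarith
    rw [hFdef]
    simp only [dist_eq_norm, add_sub_cancel_left, norm_smul, Real.norm_eq_abs,
      abs_of_nonneg hk, hnorm]
    field_simp
  have hFle : ∀ (s : ℝ) (a y : N), d a y ≠ 0 → d a y ≤ ε →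
      dist (F s a y) (ψ a) ≤ ε := by
    intro s a y hd0 hdε
    rw [hFd s a y hd0]
    have h1 : max 0 (ε - d a y) = ε - d a y := max_eq_right (by linarith)
    rw [h1]
    nlinarith [mul_nonneg (sub_nonneg.2 (hτ1 s a)) (sub_nonneg.2 hdε),
      mul_nonneg (hτ0 s a) (sub_nonneg.2 hdε)]
  -- positivity of d inside the branch
  have hdpos' : ∀ {a y : N}, Cnd a y → y ≠ a → 0 < d a y := by
    intro a y hC hya
    rw [hddef]
    refine dist_pos.2 fun h => hya ?_
    rw [hψa2 hC.1, hψy4 hC.2.1] at h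
    exact φ.injOn hC.2.1.1 hC.1.1 h
  -- F stays in the chart target inside the branch
  have hFtgt : ∀ (s : ℝ) {a y : N}, Cnd a y → y ≠ a →
      F s a y ∈ closedBall c (6 * ε) := by
    intro s a y hC hya
    have hd0 : d a y ≠ 0 := (hdpos' hC hya).ne'
    have h1 : dist (F s a y) (ψ a) ≤ ε := hFle s a y hd0 hC.2.2
    have h2 : dist (ψ a) c ≤ 2 * ε := by
      rw [hψa2 hC.1]; exact mem_closedBall.1 (mem_preimage.1 hC.1.2)
    have := dist_triangle (F s a y) (ψ a) c
    exact mem_closedBall.2 (by linarith)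
  -- P 0 is the identity
  have hP0 : ∀ a y, P 0 a y = y := by
    intro a y
    simp only [hPdef]
    by_cases h : Cnd a y
    · rw [if_pos h]
      have hτz : τ 0 a = 0 := by
        simp only [hτdef]; simp [min_eq_right (zero_le_one (α := ℝ))]
      have : F 0 a y = ψ y := by
        simp only [hFdef]; rw [hτz]; simp
      rw [this, hψy4 h.2.1]
      exact φ.left_inv h.2.1.1
    · rw [if_neg h]
  -- P never creates coincidences
  have hP3 : ∀ (s : ℝ) (a y : N), y ≠ a → P s a y ≠ a := by
    intro s a y hya
    simp only [hPdef]
    by_cases h : Cnd a y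
    · rw [if_pos h]
      intro heq
      have hd0 : d a y ≠ 0 := (hdpos' h hya).ne'
      have htgt : F s a y ∈ φ.target := hV6 (hFtgt s h hya)
      have : F s a y = φ a := by
        have := φ.right_inv htgt
        rw [heq] at this
        rw [← this]
      have hdist : dist (F s a y) (ψ a) = 0 := by
        rw [this, hψa2 h.1, dist_self]
      rw [hFd s a y hd0] at hdist
      have := hτ0 s a
      have h2 : 0 ≤ τ s a * max 0 (ε - d a y) := mul_nonneg this (le_max_left _ _)
      have := hdpos' h hya
      linarith
    · rw [if_neg h]; exact hya
  -- core and separation constants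
  set Core : Set N := φ.source ∩ φ ⁻¹' ball c ε with hCoredef
  have hCoreOpen : IsOpen Core := φ.isOpen_inter_preimage isOpen_ball
  have hpCore : p ∈ Core := ⟨hpU, mem_preimage.2 (mem_ball_self hε0)⟩
  have hCoreK : Core ⊆ Kset ε := fun a ha =>
    ⟨ha.1, mem_preimage.2 (ball_subset_closedBall ha.2)⟩
  set A : Set (N × N) := (Kset (2 * ε) ×ˢ Kset (4 * ε)) ∩ {q : N × N | ε ≤ d q.1 q.2}
    with hAdef
  have hdc : Continuous fun q : N × N => d q.1 q.2 :=
    (ψ.continuous.comp continuous_snd).dist (ψ.continuous.comp continuous_fst)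
  have hAco : IsCompact A :=
    ((hKco (by linarith)).prod (hKco (by linarith))).inter_right
      (isClosed_le continuous_const hdc)
  have hAne : ∀ q ∈ A, q.2 ≠ q.1 := by
    intro q hq heq
    have h1 : ε ≤ d q.1 q.2 := hq.2
    have h2 : d q.1 q.2 = 0 := by
      simp only [hddef]; rw [heq]; exact dist_self _
    linarith
  obtain ⟨δ₁, hδ₁, hδ₁le⟩ := exists_sep hAco hAne
  obtain ⟨δ₂, hδ₂, hδ₂sub⟩ := (hKco (by linarith : ε ≤ 6 * ε)).exists_thickening_subset_open
    (φ.isOpen_inter_preimage isOpen_ball : IsOpen (φ.source ∩ φ ⁻¹' ball c (4 * ε)))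
    (fun a ha => ⟨ha.1, mem_preimage.2 (mem_ball.2
      (lt_of_le_of_lt (mem_closedBall.1 (mem_preimage.1 ha.2)) (by linarith)))⟩)
  have hP4 : ∀ a ∈ Core, ∀ y, y ≠ a → min δ₁ δ₂ ≤ dist (P 1 a y) a := by
    intro a ha y hya
    have haK1 : a ∈ Kset ε := hCoreK ha
    have haK2 : a ∈ Kset (2 * ε) := hKmono (by linarith) haK1
    by_cases h : Cnd a y
    · have hd0 : d a y ≠ 0 := (hdpos' h hya).ne'
      have hτa : τ 1 a = 1 := by
        simp only [hτdef]; rw [hlam1 haK1]; norm_num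
      have hFda : dist (F 1 a y) (ψ a) = ε := by
        rw [hFd 1 a y hd0, hτa,
          max_eq_right (by linarith [h.2.2] : (0:ℝ) ≤ ε - d a y)]
        ring
      have htgt : F 1 a y ∈ φ.target := hV6 (hFtgt 1 h hya)
      have hy'src : φ.symm (F 1 a y) ∈ φ.source := φ.map_target htgt
      have hφy' : φ (φ.symm (F 1 a y)) = F 1 a y := φ.right_inv htgt
      have hy'K4 : φ.symm (F 1 a y) ∈ Kset (4 * ε) := by
        refine ⟨hy'src, mem_preimage.2 (mem_closedBall.2 ?_)⟩
        rw [hφy']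
        have h2 : dist (ψ a) c ≤ 2 * ε := by
          rw [hψa2 haK2]; exact mem_closedBall.1 (mem_preimage.1 haK2.2)
        calc dist (F 1 a y) c ≤ dist (F 1 a y) (ψ a) + dist (ψ a) c := dist_triangle _ _ _
          _ ≤ ε + 2 * ε := add_le_add (le_of_eq hFda) h2
          _ ≤ 4 * ε := by linarith
      have hdy' : d a (φ.symm (F 1 a y)) = ε := by
        show dist (ψ (φ.symm (F 1 a y))) (ψ a) = ε
        rw [hψy4 hy'K4, hφy', hFda]
      have hmem : (a, φ.symm (F 1 a y)) ∈ A :=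
        ⟨⟨haK2, hy'K4⟩, by show ε ≤ d a (φ.symm (F 1 a y)); rw [hdy']⟩
      have hsep := hδ₁le _ hmem
      have hPval : P 1 a y = φ.symm (F 1 a y) := by
        simp only [hPdef]; rw [if_pos h]
      rw [hPval]
      exact le_trans (min_le_left _ _) hsep
    · have hPval : P 1 a y = y := by simp only [hPdef]; rw [if_neg h]
      rw [hPval]
      by_cases hy4 : y ∈ Kset (4 * ε)
      · have hdge : ε ≤ d a y := by
          by_contra hlt; push_neg at hlt
          exact h ⟨haK2, hy4, hlt.le⟩
        exact le_trans (min_le_left _ _) (hδ₁le (a, y) ⟨⟨haK2, hy4⟩, hdge⟩)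
      · have hyO : y ∉ Metric.thickening δ₂ (Kset ε) := fun hmem =>
          hy4 ⟨(hδ₂sub hmem).1, mem_preimage.2
            (ball_subset_closedBall (mem_preimage.1 (hδ₂sub hmem).2))⟩
        have hge : δ₂ ≤ dist y a := by
          by_contra hlt; push_neg at hlt
          exact hyO (Metric.mem_thickening_iff.2 ⟨a, haK1, hlt⟩)
        exact le_trans (min_le_right _ _) hge
  refine ⟨P, Core, min δ₁ δ₂, lt_min hδ₁ hδ₂, hCoreOpen, hpCore, ?_, hP0, hP3, hP4⟩
  -- continuity of the push on the non-coincidence locus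
  have hDopen : IsOpen {q : ℝ × N × N | q.2.2 ≠ q.2.1} :=
    (isClosed_eq continuous_snd.snd continuous_snd.fst).isOpen_compl
  have hSclosed : IsClosed {q : ℝ × N × N | Cnd q.2.1 q.2.2} := by
    have h1 : IsClosed {q : ℝ × N × N | q.2.1 ∈ Kset (2 * ε)} :=
      (hKco (by linarith)).isClosed.preimage continuous_snd.fst
    have h2 : IsClosed {q : ℝ × N × N | q.2.2 ∈ Kset (4 * ε)} :=
      (hKco (by linarith)).isClosed.preimage continuous_snd.snd
    have h3 : IsClosed {q : ℝ × N × N | d q.2.1 q.2.2 ≤ ε} :=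
      isClosed_le (hdc.comp continuous_snd) continuous_const
    exact h1.inter (h2.inter h3)
  set Oa : Set N := φ.source ∩ φ ⁻¹' ball c (3 * ε) with hOadef
  set Oy : Set N := φ.source ∩ φ ⁻¹' ball c (5 * ε) with hOydef
  have hOaOpen : IsOpen Oa := φ.isOpen_inter_preimage isOpen_ball
  have hOyOpen : IsOpen Oy := φ.isOpen_inter_preimage isOpen_ball
  have hOa6 : Oa ⊆ Kset (6 * ε) := fun a ha =>
    ⟨ha.1, mem_preimage.2 (mem_closedBall.2
      (le_trans (mem_ball.1 (mem_preimage.1 ha.2)).le (by linarith)))⟩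
  have hOy6 : Oy ⊆ Kset (6 * ε) := fun a ha =>
    ⟨ha.1, mem_preimage.2 (mem_closedBall.2
      (le_trans (mem_ball.1 (mem_preimage.1 ha.2)).le (by linarith)))⟩
  set Oin : Set (ℝ × N × N) :=
    {q | q.2.1 ∈ Oa ∧ q.2.2 ∈ Oy ∧ d q.2.1 q.2.2 < 3 / 2 * ε} with hOindef
  have hOinOpen : IsOpen Oin := by
    have h1 : IsOpen {q : ℝ × N × N | q.2.1 ∈ Oa} := hOaOpen.preimage continuous_snd.fst
    have h2 : IsOpen {q : ℝ × N × N | q.2.2 ∈ Oy} := hOyOpen.preimage continuous_snd.snd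
    have h3 : IsOpen {q : ℝ × N × N | d q.2.1 q.2.2 < 3 / 2 * ε} :=
      isOpen_lt (hdc.comp continuous_snd) continuous_const
    exact h1.inter (h2.inter h3)
  have hScov : ∀ {q : ℝ × N × N}, Cnd q.2.1 q.2.2 → q ∈ Oin := by
    rintro ⟨s, a, y⟩ ⟨h2, h4, hd⟩
    have hψaeq : ψ a = φ a := hψa2 h2
    have hψyeq : ψ y = φ y := hψy4 h4
    refine ⟨⟨h2.1, mem_preimage.2 (mem_ball.2
      (lt_of_le_of_lt (mem_closedBall.1 (mem_preimage.1 h2.2)) (by linarith)))⟩,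
      ⟨h4.1, mem_preimage.2 (mem_ball.2 ?_)⟩, by show d a y < 3 / 2 * ε; linarith⟩
    have htri : dist (φ y) c ≤ dist (φ y) (φ a) + dist (φ a) c := dist_triangle _ _ _
    have hb : dist (φ y) (φ a) ≤ ε := by rw [← hψyeq, ← hψaeq]; exact hd
    have hc2 : dist (φ a) c ≤ 2 * ε := mem_closedBall.1 (mem_preimage.1 h2.2)
    linarith
  have hGeq : ∀ q ∈ Oin ∩ {q : ℝ × N × N | q.2.2 ≠ q.2.1},
      P q.1 q.2.1 q.2.2 = φ.symm (F q.1 q.2.1 q.2.2) := by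
    rintro ⟨s, a, y⟩ ⟨⟨hao, hyo, hdlt⟩, hya⟩
    have hψaeq : ψ a = φ a := hψ (hOa6 hao)
    have hψyeq : ψ y = φ y := hψ (hOy6 hyo)
    simp only [hPdef]
    by_cases h : Cnd a y
    · rw [if_pos h]
    · rw [if_neg h]
      by_cases hdε : d a y ≤ ε
      · by_cases ha2 : a ∈ Kset (2 * ε)
        · exfalso
          apply h
          refine ⟨ha2, ⟨hyo.1, mem_preimage.2 (mem_closedBall.2 ?_)⟩, hdε⟩
          have htri : dist (φ y) c ≤ dist (φ y) (φ a) + dist (φ a) c := dist_triangle _ _ _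
          have hb : dist (φ y) (φ a) ≤ ε := by rw [← hψyeq, ← hψaeq]; exact hdε
          have hc2 : dist (φ a) c ≤ 2 * ε := mem_closedBall.1 (mem_preimage.1 ha2.2)
          linarith
        · have hlamz : lam a = 0 := by
            apply hlam0
            intro hmem
            exact ha2 ⟨hmem.1, mem_preimage.2
              (ball_subset_closedBall (mem_preimage.1 hmem.2))⟩
          have hFy : F s a y = ψ y := by
            simp only [hFdef, hτdef]
            rw [hlamz]
            simp
          rw [hFy, hψyeq, φ.left_inv hyo.1]
      · push_neg at hdε
        have hmax : max 0 (ε - d a y) = 0 := max_eq_left (by linarith)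
        have hFy : F s a y = ψ y := by
          simp only [hFdef]
          rw [hmax]
          simp
        rw [hFy, hψyeq, φ.left_inv hyo.1]
  have hGc : ∀ q ∈ Oin ∩ {q : ℝ × N × N | q.2.2 ≠ q.2.1},
      ContinuousAt (fun q : ℝ × N × N => φ.symm (F q.1 q.2.1 q.2.2)) q := by
    rintro ⟨s, a, y⟩ ⟨⟨hao, hyo, hdlt⟩, hya⟩
    have hψaeq : ψ a = φ a := hψ (hOa6 hao)
    have hψyeq : ψ y = φ y := hψ (hOy6 hyo)
    have hd0 : d a y ≠ 0 := by
      refine (dist_pos.2 fun hh => hya ?_).ne'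
      rw [hψyeq, hψaeq] at hh
      exact φ.injOn hyo.1 hao.1 hh
    have hdca : ContinuousAt (fun q : ℝ × N × N => d q.2.1 q.2.2) (s, a, y) :=
      (hdc.comp continuous_snd).continuousAt
    have hFca : ContinuousAt (fun q : ℝ × N × N => F q.1 q.2.1 q.2.2) (s, a, y) := by
      simp only [hFdef]
      refine ContinuousAt.add (ψ.continuous.comp continuous_snd.fst).continuousAt ?_
      refine ContinuousAt.smul (M := ℝ) ?_
        (((ψ.continuous.comp continuous_snd.snd).sub
          (ψ.continuous.comp continuous_snd.fst) :
            Continuous fun q : ℝ × N × N => ψ q.2.2 - ψ q.2.1)).continuousAt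
      refine ContinuousAt.add continuousAt_const ?_
      refine ContinuousAt.mul ?_ ?_
      · simp only [hτdef]
        exact ((lam.continuous.comp continuous_snd.fst).mul
          (continuous_const.max (continuous_const.min continuous_fst))).continuousAt
      · exact ContinuousAt.div
          (continuous_const.max (continuous_const.sub (hdc.comp continuous_snd))).continuousAt
          hdca hd0
    have hFmem : F s a y ∈ ball c (6 * ε) := by
      have hbd : dist (F s a y) (ψ a) ≤ 3 / 2 * ε := by
        by_cases hdε : d a y ≤ ε
        · exact le_trans (hFle s a y hd0 hdε) (by linarith)
        · push_neg at hdε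
          have hmax : max 0 (ε - d a y) = 0 := max_eq_left (by linarith)
          rw [hFd s a y hd0, hmax, mul_zero, add_zero]
          exact hdlt.le
      have hac : dist (ψ a) c < 3 * ε := by
        rw [hψaeq]; exact mem_ball.1 (mem_preimage.1 hao.2)
      have htri : dist (F s a y) c ≤ dist (F s a y) (ψ a) + dist (ψ a) c :=
        dist_triangle _ _ _
      exact mem_ball.2 (by linarith)
    exact ContinuousAt.comp
      (φ.continuousOn_symm.continuousAt
        (φ.open_target.mem_nhds (hV6 (ball_subset_closedBall hFmem)))) hFca
  intro q hq
  by_cases hqS : Cnd q.2.1 q.2.2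
  · have hmem : q ∈ Oin ∩ {q : ℝ × N × N | q.2.2 ≠ q.2.1} := ⟨hScov hqS, hq⟩
    have hnb : Oin ∩ {q : ℝ × N × N | q.2.2 ≠ q.2.1} ∈ nhds q :=
      (hOinOpen.inter hDopen).mem_nhds hmem
    have heq : (fun q : ℝ × N × N => P q.1 q.2.1 q.2.2) =ᶠ[nhds q]
        (fun q : ℝ × N × N => φ.symm (F q.1 q.2.1 q.2.2)) :=
      Filter.eventuallyEq_of_mem hnb hGeq
    exact ((hGc q hmem).congr heq.symm).continuousWithinAt
  · have hnb : {q : ℝ × N × N | Cnd q.2.1 q.2.2}ᶜ ∈ nhds q :=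
      hSclosed.isOpen_compl.mem_nhds hqS
    have heq : (fun q : ℝ × N × N => P q.1 q.2.1 q.2.2) =ᶠ[nhds q]
        (fun q : ℝ × N × N => q.2.2) :=
      Filter.eventuallyEq_of_mem hnb (fun q' hq' => by
        have hq'' : ¬ Cnd q'.2.1 q'.2.2 := hq'
        simp only [hPdef]
        rw [if_neg hq''])
    exact (continuous_snd.snd.continuousAt.congr heq.symm).continuousWithinAt

end PushMachine

section Compose

variable {N : Type*} [MetricSpace N] [CompactSpace N]

lemma push_modulus {Ψ : N → N → N}
    (hc : ContinuousOn (fun q : N × N => Ψ q.1 q.2) {q : N × N | q.2 ≠ q.1})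
    (hne : ∀ a y, y ≠ a → Ψ a y ≠ a) {η : ℝ} (hη : 0 < η) :
    ∃ η' : ℝ, 0 < η' ∧ ∀ a y, η ≤ dist y a → η' ≤ dist (Ψ a y) a := by
  have hSc : IsCompact {q : N × N | η ≤ dist q.2 q.1} :=
    (isClosed_le continuous_const (continuous_snd.dist continuous_fst)).isCompact
  have hsub : {q : N × N | η ≤ dist q.2 q.1} ⊆ {q : N × N | q.2 ≠ q.1} := by
    intro q hq heq
    have : dist q.2 q.1 = 0 := by rw [heq, dist_self]
    have h1 : η ≤ dist q.2 q.1 := hq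
    linarith
  have hTc : IsCompact ((fun q : N × N => (q.1, Ψ q.1 q.2)) '' {q : N × N | η ≤ dist q.2 q.1}) :=
    hSc.image_of_continuousOn (continuousOn_fst.prodMk (hc.mono hsub))
  have hTne : ∀ z ∈ (fun q : N × N => (q.1, Ψ q.1 q.2)) '' {q : N × N | η ≤ dist q.2 q.1},
      z.2 ≠ z.1 := by
    rintro z ⟨q, hqS, rfl⟩
    exact hne q.1 q.2 (hsub hqS)
  obtain ⟨η', h1, h2⟩ := exists_sep hTc hTne
  exact ⟨η', h1, fun a y hd => h2 (a, Ψ a y) ⟨(a, y), hd, rfl⟩⟩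

lemma push_list {X : Type*} [TopologicalSpace X]
    (P : N → ℝ → N → N → N) (Core : N → Set N) (δ : N → ℝ)
    (hδ : ∀ p, 0 < δ p)
    (hcont : ∀ p, ContinuousOn (fun q : ℝ × N × N => P p q.1 q.2.1 q.2.2) {q | q.2.2 ≠ q.2.1})
    (hP0 : ∀ p a y, P p 0 a y = y)
    (hP3 : ∀ p (s : ℝ) a y, y ≠ a → P p s a y ≠ a)
    (hP4 : ∀ p, ∀ a ∈ Core p, ∀ y, y ≠ a → δ p ≤ dist (P p 1 a y) a) :
    ∀ L : List N, ∃ (Ψ : N → N → N) (ε₀ : ℝ), 0 < ε₀ ∧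
      ContinuousOn (fun q : N × N => Ψ q.1 q.2) {q : N × N | q.2 ≠ q.1} ∧
      (∀ a y, y ≠ a → Ψ a y ≠ a) ∧
      (∀ a y, y ≠ a → a ∈ (⋃ p ∈ L, Core p) → ε₀ ≤ dist (Ψ a y) a) ∧
      (∀ u v : C(X, N), (∀ x, u x ≠ v x) →
        ∃ u' : C(X, N), u.Homotopic u' ∧ ∀ x, u' x = Ψ (v x) (u x)) := by
  intro L
  induction L with
  | nil =>
      refine ⟨fun _ y => y, 1, one_pos, continuousOn_snd, fun a y h => h, ?_,
        fun u v h => ⟨u, .refl u, fun x => rfl⟩⟩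
      intro a y _ hmem
      simp at hmem
  | cons p L ih =>
      obtain ⟨Ψ, ε₀, hε₀, hΨc, hΨne, hΨcore, hΨhom⟩ := ih
      obtain ⟨η', hη', hmod⟩ := push_modulus hΨc hΨne (hδ p)
      have hinner : ContinuousOn (fun q : N × N => (q.1, P p 1 q.1 q.2))
          {q : N × N | q.2 ≠ q.1} := by
        refine continuousOn_fst.prodMk ?_
        exact (hcont p).comp
          ((continuous_const.prodMk continuous_id).continuousOn) (fun q hq => hq)
      refine ⟨fun a y => Ψ a (P p 1 a y), min η' ε₀, lt_min hη' hε₀, ?_, ?_, ?_, ?_⟩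
      · exact hΨc.comp hinner (fun q hq => hP3 p 1 q.1 q.2 hq)
      · exact fun a y h => hΨne a _ (hP3 p 1 a y h)
      · intro a y hya hmem
        obtain ⟨p', hp', hap'⟩ := mem_iUnion₂.1 hmem
        rcases List.mem_cons.1 hp' with rfl | hp'L
        · exact le_trans (min_le_left _ _) (hmod a (P p' 1 a y) (hP4 p' a hap' y hya))
        · exact le_trans (min_le_right _ _)
            (hΨcore a _ (hP3 p 1 a y hya) (mem_iUnion₂.2 ⟨p', hp'L, hap'⟩))
      · intro u v hfree
        have hmap : Continuous fun x : X => ((1 : ℝ), v x, u x) :=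
          continuous_const.prodMk (v.continuous.prodMk u.continuous)
        have hcont1 : Continuous fun x => P p 1 (v x) (u x) :=
          (hcont p).comp_continuous hmap (fun x => hfree x)
        have hmapH : Continuous fun q : unitInterval × X => ((q.1 : ℝ), v q.2, u q.2) :=
          (continuous_subtype_val.comp continuous_fst).prodMk
            ((v.continuous.comp continuous_snd).prodMk (u.continuous.comp continuous_snd))
        have hhom1 : u.Homotopic ⟨fun x => P p 1 (v x) (u x), hcont1⟩ := by
          refine ⟨⟨⟨fun q => P p (q.1 : ℝ) (v q.2) (u q.2), ?_⟩, ?_, ?_⟩⟩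
          · exact (hcont p).comp_continuous hmapH (fun q => hfree q.2)
          · intro x; simp [hP0]
          · intro x; simp
        have hfree1 : ∀ x : X, P p 1 (v x) (u x) ≠ v x :=
          fun x => hP3 p 1 (v x) (u x) (hfree x)
        obtain ⟨u', hhom2, hu'⟩ := hΨhom ⟨fun x => P p 1 (v x) (u x), hcont1⟩ v hfree1
        exact ⟨u', hhom1.trans hhom2, fun x => hu' x⟩

lemma push_main {n : ℕ} [ChartedSpace (EuclideanSpace ℝ (Fin n)) N]
    (X : Type*) [TopologicalSpace X] :
    ∃ ε₀ : ℝ, 0 < ε₀ ∧ ∀ u v : C(X, N), (∀ x, u x ≠ v x) →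
      ∃ u' : C(X, N), u.Homotopic u' ∧ ∀ x, ε₀ ≤ dist (u' x) (v x) := by
  choose P Core δ hδ hopen hmem hcont hP0 hP3 hP4 using
    exists_pushChart (N := N) (n := n)
  obtain ⟨t, ht⟩ := IsCompact.elim_finite_subcover isCompact_univ Core hopen
    (fun x _ => mem_iUnion.2 ⟨x, hmem x⟩)
  obtain ⟨Ψ, ε₀, hε₀, hΨc, hΨne, hΨcore, hΨhom⟩ :=
    push_list (X := X) P Core δ hδ hcont hP0 hP3 hP4 t.toList
  refine ⟨ε₀, hε₀, fun u v hfree => ?_⟩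
  obtain ⟨u', hhom, hu'⟩ := hΨhom u v hfree
  refine ⟨u', hhom, fun x => ?_⟩
  rw [hu' x]
  refine hΨcore (v x) (u x) (hfree x) ?_
  obtain ⟨q, hq, hvq⟩ := mem_iUnion₂.1 (ht (mem_univ (v x)))
  exact mem_iUnion₂.2 ⟨q, Finset.mem_toList.2 hq, hvq⟩

end Compose

/-- A continuous map `f : X → Y` is *loose* if there is a continuous map homotopic to `f`
which has no coincidences with `f`. -/
def Loose {X Y : Type*} [TopologicalSpace X] [TopologicalSpace Y] (f : C(X, Y)) : Prop :=
  ∃ g : C(X, Y), f.Homotopic g ∧ ∀ x, g x ≠ f x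

theorem loose_of_homotopic_coincidence_free_pair
    {m n : ℕ} (hdim : (m : ℤ) < 2 * n - 2) {M N : Type*}
    [TopologicalSpace M] [ChartedSpace (EuclideanSpace ℝ (Fin m)) M]
    [IsManifold (𝓡 m) (⊤ : ℕ∞) M] [CompactSpace M] [ConnectedSpace M] [T2Space M]
    [TopologicalSpace N] [ChartedSpace (EuclideanSpace ℝ (Fin n)) N]
    [IsManifold (𝓡 n) (⊤ : ℕ∞) N] [CompactSpace N] [ConnectedSpace N] [T2Space N]
    (f f' f'' : C(M, N)) (h' : f.Homotopic f') (h'' : f.Homotopic f'')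
    (hfree : ∀ x : M, f' x ≠ f'' x) :
    Loose f := by
  haveI : TopologicalSpace.MetrizableSpace N := Manifold.metrizableSpace (𝓡 n) N
  letI : MetricSpace N := TopologicalSpace.metrizableSpaceMetric N
  obtain ⟨ε₀, hε₀, hpush⟩ := push_main (N := N) (n := n) M
  obtain ⟨H⟩ := h'.symm
  set S : Set unitInterval :=
    {t | ∃ g : C(M, N), f''.Homotopic g ∧ ∀ x, g x ≠ H (t, x)} with hSdef
  have h0 : (0 : unitInterval) ∈ S :=
    ⟨f'', .refl f'', fun x => by rw [H.apply_zero]; exact fun h => hfree x h.symm⟩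
  have hSopen : IsOpen S := by
    rw [isOpen_iff_mem_nhds]
    rintro t ⟨g, hg, hgne⟩
    have hW : IsOpen {q : unitInterval × M | g q.2 ≠ H q} :=
      (isClosed_eq (g.continuous.comp continuous_snd) H.continuous).isOpen_compl
    obtain ⟨u, v, hu, hv, htu, hv2, huv⟩ :=
      generalized_tube_lemma isCompact_singleton isCompact_univ hW
        (by
          rintro ⟨t', x⟩ ⟨ht', -⟩
          rw [Set.mem_singleton_iff] at ht'
          subst ht'
          exact hgne x)
    refine Filter.mem_of_superset (hu.mem_nhds (htu rfl)) (fun t' ht' => ?_)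
    exact ⟨g, hg, fun x => huv (show ((t', x) : unitInterval × M) ∈ u ×ˢ v from
      ⟨ht', hv2 (mem_univ x)⟩)⟩
  have hSclosed : IsClosed S := by
    refine isClosed_of_closure_subset ?_
    intro tstar hcl
    have hWopen : IsOpen {q : unitInterval × M | dist (H q) (H (tstar, q.2)) < ε₀} :=
      isOpen_lt (H.continuous.dist
        (H.continuous.comp (continuous_const.prodMk continuous_snd))) continuous_const
    obtain ⟨u, v, hu, hv, htu, hv2, huv⟩ :=
      generalized_tube_lemma isCompact_singleton isCompact_univ hWopen
        (by
          rintro ⟨t', x⟩ ⟨ht', -⟩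
          rw [Set.mem_singleton_iff] at ht'
          subst ht'
          show dist (H (tstar, x)) (H (tstar, x)) < ε₀
          simpa [dist_self] using hε₀)
    obtain ⟨t, htu', htS⟩ := mem_closure_iff.1 hcl u hu (htu rfl)
    obtain ⟨g, hg, hgne⟩ := htS
    have hvtcont : Continuous fun x : M => H (t, x) :=
      H.continuous.comp (continuous_const.prodMk continuous_id)
    obtain ⟨g', hg', hsep⟩ := hpush g ⟨fun x => H (t, x), hvtcont⟩ hgne
    refine ⟨g', hg.trans hg', fun x heq => ?_⟩
    have h1 : ε₀ ≤ dist (g' x) (H (t, x)) := hsep x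
    have h2 : dist (H (t, x)) (H (tstar, x)) < ε₀ :=
      huv (show ((t, x) : unitInterval × M) ∈ u ×ˢ v from ⟨htu', hv2 (mem_univ x)⟩)
    rw [heq, dist_comm] at h1
    linarith
  have huniv : S = univ := (IsClopen.eq_univ ⟨hSclosed, hSopen⟩) ⟨0, h0⟩
  have h1 : (1 : unitInterval) ∈ S := huniv ▸ mem_univ _
  obtain ⟨g, hg, hgne⟩ := h1
  exact ⟨g, h''.trans hg, fun x => by have := hgne x; rwa [H.apply_one] at this⟩
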